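/- For all a, b, β ∈ ℝ and α > 0, the wall function between the line-bundle classes e_a and e_b satisfies the closed formula f_{β,α}(e_a, e_b) = (b − a)·[(a−β)²(b−β)² − (a−b)²·α² + 3α⁴] / 12. In particular, for a ≠ b the numerical λ-wall between O_{ℙ³}(a) and O_{ℙ³}(b) at s = 1/3 is the plane curve (a−β)²(b−β)² − (a−b)²·α² + 3α⁴ = 0. -/

import Mathlib

noncomputable section

/-- First twisted Chern character `ch₁^β`. -/
def ch1 (β : ℝ) (v : Fin 4 → ℝ) : ℝ := v 1 - β * v 0

/-- Second twisted Chern character `ch₂^β`. -/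
def ch2 (β : ℝ) (v : Fin 4 → ℝ) : ℝ := v 2 - β * v 1 + (β ^ 2 / 2) * v 0

/-- Third twisted Chern character `ch₃^β`. -/
def ch3 (β : ℝ) (v : Fin 4 → ℝ) : ℝ :=
  v 3 - β * v 2 + (β ^ 2 / 2) * v 1 - (β ^ 3 / 6) * v 0

/-- Negative real part `τ_{β,α}` of the Bridgeland stability function at `s = 1/3`. -/
def tau (β α : ℝ) (v : Fin 4 → ℝ) : ℝ := -ch3 β v + (α ^ 2 / 2) * ch1 β v

/-- Imaginary part `ρ_{β,α}` of the Bridgeland stability function. -/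
def rho (β α : ℝ) (v : Fin 4 → ℝ) : ℝ := ch2 β v - (α ^ 2 / 2) * v 0

/-- The wall function `f_{β,α}(u,w) = τ(u)ρ(w) − τ(w)ρ(u)`. -/
def wall (β α : ℝ) (u w : Fin 4 → ℝ) : ℝ :=
  tau β α u * rho β α w - tau β α w * rho β α u

/-- The Chern character `e_t = (1, t, t²/2, t³/6)` of `O(t)`. -/
def eV (t : ℝ) : Fin 4 → ℝ := ![1, t, t ^ 2 / 2, t ^ 3 / 6]

/-- closed formula for the wall function between two line-bundle classes,
and the resulting equation of the numerical λ-wall between `O(a)` and `O(b)`. -/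
theorem stmt5 (a b β α : ℝ) (hα : 0 < α) :
    wall β α (eV a) (eV b) =
      (b - a) * ((a - β) ^ 2 * (b - β) ^ 2 - (a - b) ^ 2 * α ^ 2 + 3 * α ^ 4) / 12 ∧
    (a ≠ b →
      (wall β α (eV a) (eV b) = 0 ↔
        (a - β) ^ 2 * (b - β) ^ 2 - (a - b) ^ 2 * α ^ 2 + 3 * α ^ 4 = 0)) := by
  have key : wall β α (eV a) (eV b) =
      (b - a) * ((a - β) ^ 2 * (b - β) ^ 2 - (a - b) ^ 2 * α ^ 2 + 3 * α ^ 4) / 12 := by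
    simp only [wall, tau, rho, ch1, ch2, ch3, eV]
    simp [Matrix.cons_val_zero, Matrix.cons_val_one]
    ring
  refine ⟨key, fun hab => ?_⟩
  rw [key]
  constructor
  · intro h
    have hba : b - a ≠ 0 := sub_ne_zero.mpr (Ne.symm hab)
    field_simp at h
    rw [mul_zero] at h
    rcases mul_eq_zero.mp h with h' | h'
    · exact absurd h' hba
    · linarith
  · intro h; rw [h]; ring
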